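/- The set $R_W$ of $W$-Riordan arrays is a subgroup of the group $L$ of invertible lower-triangular infinite matrices, and the map sending a Riordan array to its pair of parameters $(\alpha,\beta)$ is a group isomorphism onto the semidirect product of $y\mathbb{F}[[y]]^\times$ (power series of valuation 1 under opposite composition) acting on $\mathbb{F}[[y]]^\times$ (units under multiplication), with product $(\alpha,\beta)\cdot(\gamma,\delta) = (\alpha\cdot(\gamma\circ\beta), \delta\circ\beta)$. -/

import Mathlib

open Polynomial

def memL {F : Type*} [Field F] (A : ℕ → ℕ → F) : Prop :=
  (∀ n k, n < k → A n k = 0) ∧ (∀ n, A n n ≠ 0)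

def matMul {F : Type*} [Field F] (A B : ℕ → ℕ → F) : ℕ → ℕ → F :=
  fun n l => ∑ k ∈ Finset.range (n + 1), A n k * B k l

def idMat {F : Type*} [Field F] : ℕ → ℕ → F :=
  fun n k => if n = k then 1 else 0

noncomputable def colSeries {F : Type*} [Field F] (w : ℕ → F) (A : ℕ → ℕ → F)
    (k : ℕ) : PowerSeries F :=
  PowerSeries.mk fun n => A n k / w n

/-- Composition `γ ∘ β` of formal power series (meaningful when `β` has zero
constant term, in which case `coeff n (βᵏ) = 0` for `k > n`). -/
noncomputable def psComp {F : Type*} [Field F] (γ β : PowerSeries F) : PowerSeries F :=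
  PowerSeries.mk fun n =>
    ∑ k ∈ Finset.range (n + 1), PowerSeries.coeff k γ * PowerSeries.coeff n (β ^ k)

/-- `A` is a `W`-Riordan array with parameters `(α, β)`. -/
def RiordanParam {F : Type*} [Field F] (w : ℕ → F) (A : ℕ → ℕ → F)
    (α β : PowerSeries F) : Prop :=
  memL A ∧ PowerSeries.constantCoeff α ≠ 0 ∧
    PowerSeries.coeff 0 β = 0 ∧ PowerSeries.coeff 1 β ≠ 0 ∧
    ∀ k, colSeries w A k = (w k)⁻¹ • (α * β ^ k)


section RiordanAux

open PowerSeries Finset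

variable {F : Type*} [Field F]

lemma aux_coeff_pow_zero {β : PowerSeries F} (hβ : PowerSeries.constantCoeff β = 0)
    {n k : ℕ} (h : n < k) : PowerSeries.coeff n (β ^ k) = 0 := by
  have hd : (PowerSeries.X : PowerSeries F) ^ k ∣ β ^ k :=
    pow_dvd_pow_of_dvd (PowerSeries.X_dvd_iff.mpr hβ) k
  exact PowerSeries.X_pow_dvd_iff.mp hd n h


lemma aux_coeff_mul_pow_zero {α β : PowerSeries F} (hβ : PowerSeries.constantCoeff β = 0)
    {n k : ℕ} (h : n < k) : PowerSeries.coeff n (α * β ^ k) = 0 := by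
  have hd : (PowerSeries.X : PowerSeries F) ^ k ∣ α * β ^ k :=
    Dvd.dvd.mul_left (pow_dvd_pow_of_dvd (PowerSeries.X_dvd_iff.mpr hβ) k) α
  exact PowerSeries.X_pow_dvd_iff.mp hd n h

lemma aux_coeff_mul_pow_diag (α : PowerSeries F) {β : PowerSeries F}
    (hβ : PowerSeries.constantCoeff β = 0) (n : ℕ) :
    PowerSeries.coeff n (α * β ^ n) =
      PowerSeries.constantCoeff α * (PowerSeries.coeff 1 β) ^ n := by
  obtain ⟨d, hd⟩ := PowerSeries.X_dvd_iff.mpr hβ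
  have h1 : PowerSeries.coeff 1 β = PowerSeries.constantCoeff d := by
    rw [hd]
    simpa using PowerSeries.coeff_X_pow_mul d 1 0
  have h2 : α * β ^ n = PowerSeries.X ^ n * (α * d ^ n) := by
    rw [hd, mul_pow]; ring
  have h3 := PowerSeries.coeff_X_pow_mul (α * d ^ n) n 0
  rw [zero_add] at h3
  rw [h2, h3, PowerSeries.coeff_zero_eq_constantCoeff_apply, map_mul, map_pow, h1]

lemma coeff_psComp (g β : PowerSeries F) (n : ℕ) :
    PowerSeries.coeff n (psComp g β) =
      ∑ k ∈ Finset.range (n + 1), PowerSeries.coeff k g * PowerSeries.coeff n (β ^ k) := by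
  rw [psComp, PowerSeries.coeff_mk]

/-- Key coefficient formula for `α * psComp g β`. -/
lemma coeff_mul_psComp {β : PowerSeries F} (hβ : PowerSeries.constantCoeff β = 0)
    (α g : PowerSeries F) (n : ℕ) :
    PowerSeries.coeff n (α * psComp g β) =
      ∑ k ∈ Finset.range (n + 1), PowerSeries.coeff k g *
        PowerSeries.coeff n (α * β ^ k) := by
  rw [PowerSeries.coeff_mul]
  have step1 : ∀ p ∈ antidiagonal n,
      PowerSeries.coeff p.1 α * PowerSeries.coeff p.2 (psComp g β) =
        ∑ k ∈ Finset.range (n + 1), PowerSeries.coeff k g *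
          (PowerSeries.coeff p.1 α * PowerSeries.coeff p.2 (β ^ k)) := by
    intro p hp
    have hp2 : p.2 ≤ n := by
      have := Finset.HasAntidiagonal.mem_antidiagonal.mp hp; omega
    rw [coeff_psComp]
    rw [Finset.mul_sum]
    rw [Finset.sum_subset (Finset.range_subset_range.mpr (by omega : p.2 + 1 ≤ n + 1))]
    · exact Finset.sum_congr rfl fun k _ => by ring
    · intro k _ hk
      have : p.2 < k := by simp only [Finset.mem_range] at hk; omega
      rw [aux_coeff_pow_zero hβ this, mul_zero, mul_zero]
  rw [Finset.sum_congr rfl step1, Finset.sum_comm]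
  refine Finset.sum_congr rfl fun k _ => ?_
  rw [PowerSeries.coeff_mul, Finset.mul_sum]

lemma psComp_one (β : PowerSeries F) : psComp 1 β = 1 := by
  ext n
  rw [coeff_psComp]
  simp [PowerSeries.coeff_one]

lemma psComp_mul {β : PowerSeries F} (hβ : PowerSeries.constantCoeff β = 0)
    (a b : PowerSeries F) : psComp (a * b) β = psComp a β * psComp b β := by
  ext n
  have hL : PowerSeries.coeff n (psComp (a * b) β) =
      ∑ p ∈ Finset.range (n+1) ×ˢ Finset.range (n+1),
        PowerSeries.coeff p.1 a * PowerSeries.coeff p.2 b *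
          PowerSeries.coeff n (β ^ (p.1 + p.2)) := by
    rw [coeff_psComp]
    have e1 : ∀ k ∈ Finset.range (n+1),
        PowerSeries.coeff k (a * b) * PowerSeries.coeff n (β ^ k) =
          ∑ p ∈ antidiagonal k, PowerSeries.coeff p.1 a * PowerSeries.coeff p.2 b *
            PowerSeries.coeff n (β ^ (p.1 + p.2)) := by
      intro k _
      rw [PowerSeries.coeff_mul, Finset.sum_mul]
      exact Finset.sum_congr rfl fun p hp => by
        rw [Finset.HasAntidiagonal.mem_antidiagonal.mp hp]
    rw [Finset.sum_congr rfl e1]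
    rw [← Finset.sum_biUnion]
    · apply Finset.sum_subset
      · intro p hp
        simp only [Finset.mem_biUnion, Finset.mem_range, Finset.HasAntidiagonal.mem_antidiagonal] at hp
        obtain ⟨k, hk, hpk⟩ := hp
        simp only [Finset.mem_product, Finset.mem_range]
        omega
      · intro p hp hnp
        have : n < p.1 + p.2 := by
          by_contra hc
          push_neg at hc
          exact hnp (Finset.mem_biUnion.mpr ⟨p.1 + p.2, Finset.mem_range.mpr (by omega),
            Finset.HasAntidiagonal.mem_antidiagonal.mpr rfl⟩)
        rw [aux_coeff_pow_zero hβ this, mul_zero]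
    · intro x _ y _ hxy
      simp only [Finset.disjoint_left]
      intro p hp hp'
      rw [Finset.HasAntidiagonal.mem_antidiagonal] at hp hp'
      exact hxy (hp ▸ hp')
  have hR : PowerSeries.coeff n (psComp a β * psComp b β) =
      ∑ p ∈ Finset.range (n+1) ×ˢ Finset.range (n+1),
        PowerSeries.coeff p.1 a * PowerSeries.coeff p.2 b *
          PowerSeries.coeff n (β ^ (p.1 + p.2)) := by
    have h1 : psComp a β * psComp b β = psComp a β * psComp b β := rfl
    rw [coeff_mul_psComp hβ (psComp a β) b n]
    have e2 : ∀ j ∈ Finset.range (n+1),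
        PowerSeries.coeff j b * PowerSeries.coeff n (psComp a β * β ^ j) =
          ∑ i ∈ Finset.range (n+1), PowerSeries.coeff i a * PowerSeries.coeff j b *
            PowerSeries.coeff n (β ^ (i + j)) := by
      intro j _
      rw [mul_comm (psComp a β) (β ^ j), coeff_mul_psComp hβ (β ^ j) a n, Finset.mul_sum]
      refine Finset.sum_congr rfl fun i _ => ?_
      rw [mul_comm (β ^ j) (β ^ i), ← pow_add]
      ring
    rw [Finset.sum_congr rfl e2, Finset.sum_product, Finset.sum_comm]
  rw [hL, hR]

lemma psComp_pow {β : PowerSeries F} (hβ : PowerSeries.constantCoeff β = 0)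
    (a : PowerSeries F) (k : ℕ) : psComp (a ^ k) β = (psComp a β) ^ k := by
  induction k with
  | zero => simpa using psComp_one β
  | succ m ih => rw [pow_succ, pow_succ, psComp_mul hβ, ih]

lemma psComp_X_left {β : PowerSeries F} (hβ : PowerSeries.constantCoeff β = 0) :
    psComp PowerSeries.X β = β := by
  ext n
  rw [coeff_psComp]
  simp only [PowerSeries.coeff_X, ite_mul, one_mul, zero_mul]
  rw [Finset.sum_ite_eq' (Finset.range (n+1)) 1 (fun k => PowerSeries.coeff n (β ^ k))]
  rcases Nat.eq_zero_or_pos n with h | h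
  · subst h
    simp [PowerSeries.coeff_zero_eq_constantCoeff_apply, hβ]
  · rw [if_pos (Finset.mem_range.mpr (by omega)), pow_one]

lemma psComp_X_right (g : PowerSeries F) : psComp g PowerSeries.X = g := by
  ext n
  rw [coeff_psComp]
  simp only [PowerSeries.coeff_X_pow]
  rw [Finset.sum_congr rfl fun k _ => by rw [mul_ite, mul_one, mul_zero]]
  rw [Finset.sum_ite_eq (Finset.range (n+1)) n (fun k => PowerSeries.coeff k g)]
  rw [if_pos (Finset.self_mem_range_succ n)]

lemma psComp_assoc {β d : PowerSeries F} (hβ : PowerSeries.constantCoeff β = 0)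
    (hd : PowerSeries.constantCoeff d = 0) (a : PowerSeries F) :
    psComp (psComp a d) β = psComp a (psComp d β) := by
  ext n
  rw [coeff_psComp, coeff_psComp]
  have e1 : ∀ k ∈ Finset.range (n+1),
      PowerSeries.coeff k (psComp a d) * PowerSeries.coeff n (β ^ k) =
        ∑ j ∈ Finset.range (n+1), PowerSeries.coeff j a *
          (PowerSeries.coeff k (d ^ j) * PowerSeries.coeff n (β ^ k)) := by
    intro k hk
    rw [coeff_psComp, Finset.sum_mul]
    rw [Finset.sum_subset (Finset.range_subset_range.mpr
      (by have := Finset.mem_range.mp hk; omega : k + 1 ≤ n + 1))]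
    · exact Finset.sum_congr rfl fun j _ => by ring
    · intro j _ hj
      have : k < j := by simp only [Finset.mem_range] at hj; omega
      rw [aux_coeff_pow_zero hd this]; ring
  rw [Finset.sum_congr rfl e1, Finset.sum_comm]
  refine Finset.sum_congr rfl fun j _ => ?_
  rw [← Finset.mul_sum, ← coeff_psComp (d ^ j) β n, psComp_pow hβ]

lemma coeff_zero_psComp (g β : PowerSeries F) :
    PowerSeries.coeff 0 (psComp g β) = PowerSeries.coeff 0 g := by
  rw [coeff_psComp]
  simp

lemma coeff_one_psComp (g β : PowerSeries F) :
    PowerSeries.coeff 1 (psComp g β) =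
      PowerSeries.coeff 1 g * PowerSeries.coeff 1 β := by
  rw [coeff_psComp]
  rw [Finset.sum_range_succ, Finset.sum_range_one]
  simp [PowerSeries.coeff_one]

/-- Coefficients of the compositional inverse of `β`. -/
noncomputable def invC (β : PowerSeries F) : ℕ → F := fun n =>
  (PowerSeries.coeff 1 β)⁻¹ ^ n *
    ((if n = 1 then 1 else 0) -
      ∑ k ∈ (Finset.range n).attach, invC β k.1 * PowerSeries.coeff n (β ^ k.1))
decreasing_by exact Finset.mem_range.mp k.2

noncomputable def compInv (β : PowerSeries F) : PowerSeries F :=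
  PowerSeries.mk (invC β)

lemma invC_eq (β : PowerSeries F) (n : ℕ) :
    invC β n = (PowerSeries.coeff 1 β)⁻¹ ^ n *
      ((if n = 1 then 1 else 0) -
        ∑ k ∈ Finset.range n, invC β k * PowerSeries.coeff n (β ^ k)) := by
  rw [invC]
  congr 1
  rw [sub_right_inj]
  exact Finset.sum_attach (Finset.range n) (fun k => invC β k * PowerSeries.coeff n (β ^ k))

lemma compInv_coeff_zero (β : PowerSeries F) : PowerSeries.coeff 0 (compInv β) = 0 := by
  rw [compInv, PowerSeries.coeff_mk, invC_eq]
  simp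

lemma compInv_coeff_one (β : PowerSeries F) :
    PowerSeries.coeff 1 (compInv β) = (PowerSeries.coeff 1 β)⁻¹ := by
  have h0 : invC β 0 = 0 := by rw [invC_eq]; simp
  rw [compInv, PowerSeries.coeff_mk, invC_eq]
  simp [h0, PowerSeries.coeff_one]

lemma aux_coeff_pow_diag {β : PowerSeries F} (hβ : PowerSeries.constantCoeff β = 0)
    (n : ℕ) : PowerSeries.coeff n (β ^ n) = (PowerSeries.coeff 1 β) ^ n := by
  obtain ⟨d, hd⟩ := PowerSeries.X_dvd_iff.mpr hβ
  have h1 : PowerSeries.coeff 1 β = PowerSeries.constantCoeff d := by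
    rw [hd]; simpa using PowerSeries.coeff_X_pow_mul d 1 0
  have h2 : β ^ n = PowerSeries.X ^ n * d ^ n := by rw [hd, mul_pow]
  have h3 := PowerSeries.coeff_X_pow_mul (d ^ n) n 0
  rw [zero_add] at h3
  rw [h2, h3, PowerSeries.coeff_zero_eq_constantCoeff_apply, map_pow, h1]

lemma psComp_compInv_left {β : PowerSeries F} (hβ : PowerSeries.constantCoeff β = 0)
    (hβ1 : PowerSeries.coeff 1 β ≠ 0) : psComp (compInv β) β = PowerSeries.X := by
  ext n
  rw [coeff_psComp, PowerSeries.coeff_X, Finset.sum_range_succ]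
  have hdiag : PowerSeries.coeff n (β ^ n) = (PowerSeries.coeff 1 β) ^ n :=
    aux_coeff_pow_diag hβ n
  have hc : ∀ k, PowerSeries.coeff k (compInv β) = invC β k := fun k => by
    rw [compInv, PowerSeries.coeff_mk]
  have hsum : ∀ k, PowerSeries.coeff k (compInv β) * PowerSeries.coeff n (β ^ k)
      = invC β k * PowerSeries.coeff n (β ^ k) := fun k => by rw [hc]
  rw [Finset.sum_congr rfl fun k _ => hsum k, hc, invC_eq, hdiag]
  have hpow : (PowerSeries.coeff 1 β)⁻¹ ^ n * (PowerSeries.coeff 1 β) ^ n = 1 := by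
    rw [← mul_pow, inv_mul_cancel₀ hβ1, one_pow]
  set S := ∑ k ∈ Finset.range n, invC β k * PowerSeries.coeff n (β ^ k)
  set T : F := if n = 1 then 1 else 0
  calc S + (PowerSeries.coeff 1 β)⁻¹ ^ n * (T - S) * (PowerSeries.coeff 1 β) ^ n
      = S + (T - S) * ((PowerSeries.coeff 1 β)⁻¹ ^ n * (PowerSeries.coeff 1 β) ^ n) := by
        ring
    _ = T := by rw [hpow]; ring

lemma psComp_compInv_right {β : PowerSeries F} (hβ : PowerSeries.constantCoeff β = 0)
    (hβ1 : PowerSeries.coeff 1 β ≠ 0) : psComp β (compInv β) = PowerSeries.X := by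
  set δ := compInv β with hδ
  have hδ0 : PowerSeries.constantCoeff δ = 0 := by
    rw [← PowerSeries.coeff_zero_eq_constantCoeff_apply]; exact compInv_coeff_zero β
  have hδ1 : PowerSeries.coeff 1 δ ≠ 0 := by
    rw [hδ, compInv_coeff_one]; exact inv_ne_zero hβ1
  have hεδ : psComp (compInv δ) δ = PowerSeries.X := psComp_compInv_left hδ0 hδ1
  have key : compInv δ = β := by
    calc compInv δ = psComp (compInv δ) PowerSeries.X := (psComp_X_right _).symm
      _ = psComp (compInv δ) (psComp δ β) := by rw [psComp_compInv_left hβ hβ1]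
      _ = psComp (psComp (compInv δ) δ) β := (psComp_assoc hβ hδ0 _).symm
      _ = psComp PowerSeries.X β := by rw [hεδ]
      _ = β := psComp_X_left hβ
  rw [← key, hεδ]


/-- The canonical matrix attached to a pair of parameters. -/
noncomputable def canMat (w : ℕ → F) (α β : PowerSeries F) : ℕ → ℕ → F :=
  fun n k => w n * (w k)⁻¹ * PowerSeries.coeff n (α * β ^ k)

lemma riordan_canMat {w : ℕ → F} (hw : ∀ n, w n ≠ 0) {α β : PowerSeries F}
    (hα : PowerSeries.constantCoeff α ≠ 0) (hβ0 : PowerSeries.coeff 0 β = 0)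
    (hβ1 : PowerSeries.coeff 1 β ≠ 0) : RiordanParam w (canMat w α β) α β := by
  have hβ0' : PowerSeries.constantCoeff β = 0 := by
    rwa [PowerSeries.coeff_zero_eq_constantCoeff_apply] at hβ0
  refine ⟨⟨fun n k h => ?_, fun n => ?_⟩, hα, hβ0, hβ1, fun k => ?_⟩
  · rw [canMat, aux_coeff_mul_pow_zero hβ0' h, mul_zero]
  · rw [canMat, aux_coeff_mul_pow_diag α hβ0' n, mul_inv_cancel₀ (hw n), one_mul]
    exact mul_ne_zero hα (pow_ne_zero _ hβ1)
  · ext n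
    rw [colSeries, PowerSeries.coeff_mk, PowerSeries.coeff_smul, smul_eq_mul, canMat,
      div_eq_iff (hw n)]
    ring

lemma riordan_eq_canMat {w : ℕ → F} (hw : ∀ n, w n ≠ 0) {A : ℕ → ℕ → F}
    {α β : PowerSeries F} (h : RiordanParam w A α β) : A = canMat w α β := by
  funext n k
  have h1 := congrArg (PowerSeries.coeff n) (h.2.2.2.2 k)
  rw [colSeries, PowerSeries.coeff_mk, PowerSeries.coeff_smul, smul_eq_mul,
    div_eq_iff (hw n)] at h1
  rw [canMat, h1]
  ring

end RiordanAux

/-- The `W`-Riordan arrays form a subgroup of `L`, and `A ↦ (α, β)` is a group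
isomorphism onto the semidirect product of `y𝔽[[y]]ˣ` (opposite composition)
acting on `𝔽[[y]]ˣ` (multiplication), with product
`(α, β)·(γ, δ) = (α·(γ∘β), δ∘β)`. -/
theorem stmt3 {F : Type*} [Field F] (w : ℕ → F) (hw0 : w 0 = 1)
    (hw : ∀ n, w n ≠ 0) :
    -- the identity of `L` is Riordan, with parameters `(1, y)`
    RiordanParam w (idMat (F := F)) 1 PowerSeries.X ∧
    -- closure: the product is Riordan, with the semidirect-product parameters
    (∀ A B : ℕ → ℕ → F, ∀ α β γ δ : PowerSeries F,
      RiordanParam w A α β → RiordanParam w B γ δ →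
        RiordanParam w (matMul A B) (α * psComp γ β) (psComp δ β)) ∧
    -- inverses exist within the Riordan group
    (∀ (A : ℕ → ℕ → F) (α β : PowerSeries F), RiordanParam w A α β →
      ∃ (B : ℕ → ℕ → F) (γ δ : PowerSeries F), RiordanParam w B γ δ ∧
        matMul A B = idMat ∧ matMul B A = idMat) ∧
    -- the parametrization is injective in both directions …
    (∀ (A B : ℕ → ℕ → F) (α β : PowerSeries F),
      RiordanParam w A α β → RiordanParam w B α β → A = B) ∧
    (∀ (A : ℕ → ℕ → F) (α β α' β' : PowerSeries F),
      RiordanParam w A α β → RiordanParam w A α' β' → α = α' ∧ β = β') ∧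
    -- … and surjective onto all admissible pairs `(α, β)`
    (∀ α β : PowerSeries F, PowerSeries.constantCoeff α ≠ 0 →
      PowerSeries.coeff 0 β = 0 → PowerSeries.coeff 1 β ≠ 0 →
        ∃ A : ℕ → ℕ → F, RiordanParam w A α β) := by
  classical
  -- identity
  have hidX : (idMat (F := F)) = canMat w 1 PowerSeries.X := by
    funext n k
    rw [idMat, canMat, one_mul, PowerSeries.coeff_X_pow]
    by_cases h : n = k
    · subst h; simp [mul_inv_cancel₀ (hw n)]
    · simp [h]
  have hX0 : PowerSeries.coeff 0 (PowerSeries.X : PowerSeries F) = 0 := by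
    simp
  have hX1 : PowerSeries.coeff 1 (PowerSeries.X : PowerSeries F) ≠ 0 := by
    simp
  have h1ne : PowerSeries.constantCoeff (1 : PowerSeries F) ≠ 0 := by
    simp
  have hid : RiordanParam w (idMat (F := F)) 1 PowerSeries.X := by
    rw [hidX]; exact riordan_canMat hw h1ne hX0 hX1
  -- closure
  have hclos : ∀ A B : ℕ → ℕ → F, ∀ α β γ δ : PowerSeries F,
      RiordanParam w A α β → RiordanParam w B γ δ →
        RiordanParam w (matMul A B) (α * psComp γ β) (psComp δ β) := by
    intro A B α β γ δ hA hB
    obtain ⟨-, hα0, hβ0, hβ1, -⟩ := id hA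
    obtain ⟨-, hγ0, hδ0, hδ1, -⟩ := id hB
    have hβ0' : PowerSeries.constantCoeff β = 0 := by
      rwa [PowerSeries.coeff_zero_eq_constantCoeff_apply] at hβ0
    have hmm : matMul A B = canMat w (α * psComp γ β) (psComp δ β) := by
      rw [riordan_eq_canMat hw hA, riordan_eq_canMat hw hB]
      funext n l
      have hterm : ∀ k ∈ Finset.range (n + 1),
          canMat w α β n k * canMat w γ δ k l =
            w n * (w l)⁻¹ * (PowerSeries.coeff k (γ * δ ^ l) *
              PowerSeries.coeff n (α * β ^ k)) := by
        intro k _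
        rw [canMat, canMat]
        have h1 : (w k)⁻¹ * w k = 1 := inv_mul_cancel₀ (hw k)
        calc w n * (w k)⁻¹ * PowerSeries.coeff n (α * β ^ k) *
              (w k * (w l)⁻¹ * PowerSeries.coeff k (γ * δ ^ l))
            = w n * (w l)⁻¹ * (PowerSeries.coeff k (γ * δ ^ l) *
                PowerSeries.coeff n (α * β ^ k)) * ((w k)⁻¹ * w k) := by ring
          _ = _ := by rw [h1, mul_one]
      have hps : (α * psComp γ β) * (psComp δ β) ^ l = α * psComp (γ * δ ^ l) β := by
        rw [psComp_mul hβ0', psComp_pow hβ0', mul_assoc]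
      rw [matMul, Finset.sum_congr rfl hterm, ← Finset.mul_sum]
      rw [canMat, hps, coeff_mul_psComp hβ0' α (γ * δ ^ l) n]
    rw [hmm]
    refine riordan_canMat hw ?_ ?_ ?_
    · rw [map_mul]
      refine mul_ne_zero hα0 ?_
      rw [← PowerSeries.coeff_zero_eq_constantCoeff_apply, coeff_zero_psComp]
      rwa [PowerSeries.coeff_zero_eq_constantCoeff_apply]
    · rw [coeff_zero_psComp]; exact hδ0
    · rw [coeff_one_psComp]; exact mul_ne_zero hδ1 hβ1
  -- uniqueness of the array
  have huniq : ∀ (A B : ℕ → ℕ → F) (α β : PowerSeries F),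
      RiordanParam w A α β → RiordanParam w B α β → A = B := by
    intro A B α β hA hB
    rw [riordan_eq_canMat hw hA, riordan_eq_canMat hw hB]
  refine ⟨hid, hclos, ?_, huniq, ?_, ?_⟩
  · -- inverses
    intro A α β hA
    obtain ⟨-, hα0, hβ0, hβ1, -⟩ := id hA
    have hβ0' : PowerSeries.constantCoeff β = 0 := by
      rwa [PowerSeries.coeff_zero_eq_constantCoeff_apply] at hβ0
    set δ := compInv β with hδdef
    have hδ0 : PowerSeries.coeff 0 δ = 0 := compInv_coeff_zero β
    have hδ0' : PowerSeries.constantCoeff δ = 0 := by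
      rwa [PowerSeries.coeff_zero_eq_constantCoeff_apply] at hδ0
    have hδ1 : PowerSeries.coeff 1 δ ≠ 0 := by
      rw [hδdef, compInv_coeff_one]; exact inv_ne_zero hβ1
    have hαδ0 : PowerSeries.constantCoeff (psComp α δ) ≠ 0 := by
      rw [← PowerSeries.coeff_zero_eq_constantCoeff_apply, coeff_zero_psComp]
      rwa [PowerSeries.coeff_zero_eq_constantCoeff_apply]
    set γ := (psComp α δ)⁻¹ with hγdef
    have hγ0 : PowerSeries.constantCoeff γ ≠ 0 := by
      rw [hγdef, PowerSeries.constantCoeff_inv]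
      exact inv_ne_zero hαδ0
    have hB : RiordanParam w (canMat w γ δ) γ δ := riordan_canMat hw hγ0 hδ0 hδ1
    have e2 : psComp δ β = PowerSeries.X := psComp_compInv_left hβ0' hβ1
    have e2' : psComp β δ = PowerSeries.X := psComp_compInv_right hβ0' hβ1
    have hmulinv : γ * psComp α δ = 1 := PowerSeries.inv_mul_cancel _ hαδ0
    refine ⟨canMat w γ δ, γ, δ, hB, ?_, ?_⟩
    · have hAB := hclos A (canMat w γ δ) α β γ δ hA hB
      have e1 : α * psComp γ β = 1 := by
        have h4 : psComp (γ * psComp α δ) β = psComp γ β * psComp (psComp α δ) β :=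
          psComp_mul hβ0' _ _
        rw [hmulinv, psComp_one] at h4
        have h5 : psComp (psComp α δ) β = α := by
          rw [psComp_assoc hβ0' hδ0' α, e2, psComp_X_right]
        rw [h5] at h4
        rw [mul_comm]
        exact h4.symm
      rw [e1, e2] at hAB
      exact huniq _ _ _ _ hAB hid
    · have hBA := hclos (canMat w γ δ) A γ δ α β hB hA
      rw [hmulinv, e2'] at hBA
      exact huniq _ _ _ _ hBA hid
  · -- uniqueness of parameters
    intro A α β α' β' hA hA'
    have hcol0 : ∀ (α β : PowerSeries F), RiordanParam w A α β → colSeries w A 0 = α := by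
      intro α β h
      rw [h.2.2.2.2 0, pow_zero, mul_one, hw0, inv_one, one_smul]
    have hα : α = α' := by rw [← hcol0 α β hA, ← hcol0 α' β' hA']
    refine ⟨hα, ?_⟩
    have h1 := hA.2.2.2.2 1
    have h2 := hA'.2.2.2.2 1
    rw [← hα] at h2
    rw [h2] at h1
    have h3 : α * β' = α * β := by
      have h4 := congrArg (fun f => (w 1 : F) • f) h1
      simp only [smul_smul, mul_inv_cancel₀ (hw 1), one_smul, pow_one] at h4
      exact h4
    have hαne : α ≠ 0 := fun h => hA.2.1 (by rw [h, map_zero])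
    exact (mul_left_cancel₀ hαne h3).symm
  · -- surjectivity
    intro α β hα0 hβ0 hβ1
    exact ⟨canMat w α β, riordan_canMat hw hα0 hβ0 hβ1⟩
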